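/- Let L be an N×N real symmetric matrix, let s be a nonzero vector in ℝ^N, and let V_M be an N×M real matrix with orthonormal columns whose columns span the Krylov subspace K_M(L,s) = span{s, Ls, …, L^{M−1}s} and whose first column is s/‖s‖₂, and set H_M = V_Mᵀ L V_M. Let g be a function defined on the union of the spectra of L and H_M. Then ‖g(L)s − ‖s‖₂ · V_M g(H_M) e₁‖₂ ≤ 2‖s‖₂ · min over all polynomials p of degree at most M−1 of max over z in spec(L) ∪ spec(H_M) of |g(z) − p(z)|. -/

import Mathlib

open Matrix Polynomial

/-- The Euclidean norm of a vector in `Fin n → ℝ`. -/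
noncomputable def euclNorm {n : ℕ} (x : Fin n → ℝ) : ℝ := Real.sqrt (∑ i, x i ^ 2)

lemma euclNorm_eq_norm {n : ℕ} (x : Fin n → ℝ) :
    euclNorm x = ‖(WithLp.equiv 2 (Fin n → ℝ)).symm x‖ := by
  rw [EuclideanSpace.norm_eq]
  unfold euclNorm
  congr 1
  refine Finset.sum_congr rfl fun i _ => ?_
  simp [Real.norm_eq_abs, sq_abs]

lemma euclNorm_nonneg {n : ℕ} (x : Fin n → ℝ) : 0 ≤ euclNorm x := Real.sqrt_nonneg _

lemma euclNorm_sub_le {n : ℕ} (a b : Fin n → ℝ) :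
    euclNorm (a - b) ≤ euclNorm a + euclNorm b := by
  rw [euclNorm_eq_norm, euclNorm_eq_norm, euclNorm_eq_norm]
  exact norm_sub_le _ _

lemma euclNorm_smul {n : ℕ} (c : ℝ) (x : Fin n → ℝ) :
    euclNorm (c • x) = |c| * euclNorm x := by
  rw [euclNorm_eq_norm, euclNorm_eq_norm]
  rw [show (WithLp.equiv 2 (Fin n → ℝ)).symm (c • x) = c • (WithLp.equiv 2 (Fin n → ℝ)).symm x from rfl]
  rw [norm_smul, Real.norm_eq_abs]

lemma euclNorm_pos {n : ℕ} (x : Fin n → ℝ) (hx : x ≠ 0) : 0 < euclNorm x := by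
  rw [euclNorm_eq_norm]
  rw [norm_pos_iff]
  intro h
  apply hx
  funext i
  simpa using congrArg (fun y => y i) h

lemma dotProduct_eq_sum_sq {n : ℕ} (x : Fin n → ℝ) : x ⬝ᵥ x = ∑ i, x i ^ 2 := by
  simp [dotProduct, sq]

lemma euclNorm_mulVec_orth {n m : ℕ} (A : Matrix (Fin n) (Fin m) ℝ) (h : Aᵀ * A = 1)
    (x : Fin m → ℝ) : euclNorm (A *ᵥ x) = euclNorm x := by
  unfold euclNorm
  congr 1
  rw [← dotProduct_eq_sum_sq, ← dotProduct_eq_sum_sq]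
  rw [Matrix.dotProduct_mulVec, ← Matrix.mulVec_transpose, Matrix.mulVec_mulVec, h,
    Matrix.one_mulVec]

lemma euclNorm_diag_mulVec_le {n : ℕ} (d : Fin n → ℝ) (C : ℝ) (hC : 0 ≤ C)
    (h : ∀ i, |d i| ≤ C) (x : Fin n → ℝ) :
    euclNorm (Matrix.diagonal d *ᵥ x) ≤ C * euclNorm x := by
  unfold euclNorm
  rw [← Real.sqrt_sq hC, ← Real.sqrt_mul (sq_nonneg C)]
  apply Real.sqrt_le_sqrt
  rw [Finset.mul_sum]
  refine Finset.sum_le_sum fun i _ => ?_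
  rw [Matrix.mulVec_diagonal, mul_pow]
  have : d i ^ 2 ≤ C ^ 2 := by
    have := h i
    nlinarith [abs_nonneg (d i), le_abs_self (d i), neg_abs_le (d i)]
  exact mul_le_mul_of_nonneg_right this (sq_nonneg _)

lemma diagonal_sum' {n : ℕ} (T : Finset ℕ) (f : ℕ → Fin n → ℝ) :
    ∑ k ∈ T, Matrix.diagonal (f k) = Matrix.diagonal (fun i => ∑ k ∈ T, f k i) := by
  ext i j
  by_cases hij : i = j
  · subst hij; simp [Matrix.sum_apply, Matrix.diagonal_apply_eq]
  · simp [Matrix.sum_apply, Matrix.diagonal_apply_ne _ hij]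

lemma sum_mulVec' {n m : ℕ} (T : Finset ℕ) (f : ℕ → Matrix (Fin n) (Fin m) ℝ) (x : Fin m → ℝ) :
    (∑ k ∈ T, f k) *ᵥ x = ∑ k ∈ T, (f k) *ᵥ x := by
  induction T using Finset.induction with
  | empty => simp [Matrix.zero_mulVec]
  | @insert a T' h ih => rw [Finset.sum_insert h, Finset.sum_insert h, Matrix.add_mulVec, ih]

lemma mulVec_sum' {n m : ℕ} (T : Finset ℕ) (A : Matrix (Fin n) (Fin m) ℝ) (f : ℕ → Fin m → ℝ) :
    A *ᵥ (∑ k ∈ T, f k) = ∑ k ∈ T, A *ᵥ f k := by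
  induction T using Finset.induction with
  | empty => simp [Matrix.mulVec_zero]
  | @insert a T' h ih => rw [Finset.sum_insert h, Finset.sum_insert h, Matrix.mulVec_add, ih]

lemma spec_conj_mem {n : ℕ} (A Q : Matrix (Fin n) (Fin n) ℝ) (d : Fin n → ℝ)
    (hQ : Qᵀ * Q = 1) (hA : A = Q * Matrix.diagonal d * Qᵀ) (i : Fin n) :
    d i ∈ spectrum ℝ A := by
  rw [spectrum.mem_iff]
  intro hu
  set v : Fin n → ℝ := Q *ᵥ Pi.single i 1 with hv
  have hv0 : v ⬝ᵥ v = 1 := by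
    rw [hv, Matrix.dotProduct_mulVec, ← Matrix.mulVec_transpose, Matrix.mulVec_mulVec, hQ,
      Matrix.one_mulVec]
    simp [dotProduct, Pi.single_apply]
  have hsingle : (Pi.single i (d i) : Fin n → ℝ) = d i • (Pi.single i 1 : Fin n → ℝ) := by
    funext j
    simp only [Pi.single_apply, Pi.smul_apply, smul_eq_mul, mul_ite, mul_one, mul_zero]
  have hLv : A *ᵥ v = d i • v := by
    rw [hA, hv, Matrix.mulVec_mulVec, Matrix.mul_assoc (Q * Matrix.diagonal d) Qᵀ Q, hQ, mul_one,
      ← Matrix.mulVec_mulVec, Matrix.diagonal_mulVec_single, mul_one, hsingle, Matrix.mulVec_smul]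
  have hzero : ((algebraMap ℝ (Matrix (Fin n) (Fin n) ℝ)) (d i) - A) *ᵥ v = 0 := by
    rw [Matrix.sub_mulVec, hLv, Algebra.algebraMap_eq_smul_one, Matrix.smul_mulVec,
      Matrix.one_mulVec, sub_self]
  obtain ⟨u, hu⟩ := hu
  have hvz : v = 0 := by
    have h1 : (↑u⁻¹ : Matrix (Fin n) (Fin n) ℝ) * (↑u : Matrix (Fin n) (Fin n) ℝ) = 1 := u.inv_mul
    calc v = ((↑u⁻¹ : Matrix (Fin n) (Fin n) ℝ) * (↑u : Matrix (Fin n) (Fin n) ℝ)) *ᵥ v := by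
            rw [h1, Matrix.one_mulVec]
    _ = (↑u⁻¹ : Matrix (Fin n) (Fin n) ℝ) *ᵥ ((↑u : Matrix (Fin n) (Fin n) ℝ) *ᵥ v) :=
            (Matrix.mulVec_mulVec _ _ _).symm
    _ = 0 := by rw [hu, hzero, Matrix.mulVec_zero]
  rw [hvz] at hv0
  simp at hv0

lemma spec_conj_subset {n : ℕ} (A Q : Matrix (Fin n) (Fin n) ℝ) (d : Fin n → ℝ)
    (hQ : Qᵀ * Q = 1) (hA : A = Q * Matrix.diagonal d * Qᵀ) :
    spectrum ℝ A ⊆ Set.range d := by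
  have hQQ : Q * Qᵀ = 1 := mul_eq_one_comm.mp hQ
  intro z hz
  by_contra hzr
  rw [spectrum.mem_iff] at hz
  apply hz
  have hne : ∀ i, z - d i ≠ 0 := by
    intro i h
    exact hzr ⟨i, by linarith [sub_eq_zero.mp h]⟩
  have key : ∀ a b : Fin n → ℝ, (Q * Matrix.diagonal a * Qᵀ) * (Q * Matrix.diagonal b * Qᵀ)
      = Q * Matrix.diagonal (fun i => a i * b i) * Qᵀ := by
    intro a b
    have h2 : Q * Matrix.diagonal a * Qᵀ * (Q * Matrix.diagonal b * Qᵀ)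
        = Q * (Matrix.diagonal a * (Qᵀ * Q) * Matrix.diagonal b) * Qᵀ := by
      simp only [Matrix.mul_assoc]
    rw [h2, hQ, mul_one, Matrix.diagonal_mul_diagonal]
  have h1 : Q * Matrix.diagonal (fun _ : Fin n => z) * Qᵀ = z • 1 := by
    have hd1 : Matrix.diagonal (fun _ : Fin n => z) = z • (1 : Matrix (Fin n) (Fin n) ℝ) :=
      (Matrix.smul_one_eq_diagonal z).symm
    rw [hd1, Matrix.mul_smul, mul_one, Matrix.smul_mul, hQQ]
  have hdiag : Matrix.diagonal (fun i : Fin n => z - d i)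
      = Matrix.diagonal (fun _ : Fin n => z) - Matrix.diagonal d := by
    rw [← Matrix.diagonal_sub]; try rfl
  have hrepr : (algebraMap ℝ (Matrix (Fin n) (Fin n) ℝ)) z - A
      = Q * Matrix.diagonal (fun i => z - d i) * Qᵀ := by
    rw [Algebra.algebraMap_eq_smul_one, hA, hdiag, Matrix.mul_sub, Matrix.sub_mul, h1]
  refine ⟨⟨(algebraMap ℝ (Matrix (Fin n) (Fin n) ℝ)) z - A,
    Q * Matrix.diagonal (fun i => (z - d i)⁻¹) * Qᵀ, ?_, ?_⟩, rfl⟩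
  · rw [hrepr, key]
    rw [show (fun i => (z - d i) * (z - d i)⁻¹) = fun _ : Fin n => (1:ℝ) from
      funext fun i => mul_inv_cancel₀ (hne i)]
    rw [Matrix.diagonal_one, mul_one, hQQ]
  · rw [hrepr, key]
    rw [show (fun i => (z - d i)⁻¹ * (z - d i)) = fun _ : Fin n => (1:ℝ) from
      funext fun i => inv_mul_cancel₀ (hne i)]
    rw [Matrix.diagonal_one, mul_one, hQQ]
lemma conj_mul' {n : ℕ} (Q : Matrix (Fin n) (Fin n) ℝ) (hQ : Qᵀ * Q = 1) (a b : Fin n → ℝ) :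
    (Q * Matrix.diagonal a * Qᵀ) * (Q * Matrix.diagonal b * Qᵀ)
      = Q * Matrix.diagonal (fun i => a i * b i) * Qᵀ := by
  have h2 : Q * Matrix.diagonal a * Qᵀ * (Q * Matrix.diagonal b * Qᵀ)
      = Q * (Matrix.diagonal a * (Qᵀ * Q) * Matrix.diagonal b) * Qᵀ := by
    simp only [Matrix.mul_assoc]
  rw [h2, hQ, mul_one, Matrix.diagonal_mul_diagonal]

lemma conj_pow' {n : ℕ} (Q : Matrix (Fin n) (Fin n) ℝ) (hQ : Qᵀ * Q = 1) (a : Fin n → ℝ)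
    (A : Matrix (Fin n) (Fin n) ℝ) (hA : A = Q * Matrix.diagonal a * Qᵀ) (k : ℕ) :
    A ^ k = Q * Matrix.diagonal (fun i => a i ^ k) * Qᵀ := by
  have hQQ : Q * Qᵀ = 1 := mul_eq_one_comm.mp hQ
  induction k with
  | zero =>
    rw [pow_zero, show (fun i => a i ^ 0) = fun _ : Fin n => (1:ℝ) from funext fun i => pow_zero _,
      Matrix.diagonal_one, mul_one, hQQ]
  | succ k ih =>
    rw [pow_succ, ih, hA, conj_mul' Q hQ,
      show (fun i => a i ^ k * a i) = fun i => a i ^ (k+1) from funext fun i => (pow_succ _ _).symm]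

lemma conj_poly' {n m : ℕ} (Q : Matrix (Fin n) (Fin n) ℝ) (hQ : Qᵀ * Q = 1) (a : Fin n → ℝ)
    (A : Matrix (Fin n) (Fin n) ℝ) (hA : A = Q * Matrix.diagonal a * Qᵀ) (c : ℕ → ℝ) :
    ∑ k ∈ Finset.range m, c k • A ^ k
      = Q * Matrix.diagonal (fun i => ∑ k ∈ Finset.range m, c k * a i ^ k) * Qᵀ := by
  have step : ∀ k, c k • A ^ k = Q * Matrix.diagonal (fun i => c k * a i ^ k) * Qᵀ := by
    intro k
    rw [conj_pow' Q hQ a A hA k,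
      show (fun i => c k * a i ^ k) = c k • (fun i => a i ^ k) from funext fun i => rfl,
      Matrix.diagonal_smul, Matrix.mul_smul, Matrix.smul_mul]
  calc ∑ k ∈ Finset.range m, c k • A ^ k
      = ∑ k ∈ Finset.range m, Q * Matrix.diagonal (fun i => c k * a i ^ k) * Qᵀ :=
        Finset.sum_congr rfl fun k _ => step k
    _ = Q * (∑ k ∈ Finset.range m, Matrix.diagonal (fun i => c k * a i ^ k)) * Qᵀ := by
        rw [Finset.mul_sum, Finset.sum_mul]
    _ = Q * Matrix.diagonal (fun i => ∑ k ∈ Finset.range m, c k * a i ^ k) * Qᵀ := by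
        rw [diagonal_sum']

/-- The Lanczos approximation error bound with the maximum taken over the union
of the spectra of `L` and `H_M`:
`‖g(L)s − ‖s‖₂ V_M g(H_M) e₁‖₂ ≤ 2‖s‖₂ · min_{p ∈ P_{M−1}} max_{z ∈ spec(L) ∪ spec(H_M)} |g(z) − p(z)|`. -/
theorem lanczos_error_bound_spectra
    (N M : ℕ) (hM : 0 < M)
    (L : Matrix (Fin N) (Fin N) ℝ) (hL : L.IsSymm)
    -- a spectral decomposition of L
    (U : Matrix (Fin N) (Fin N) ℝ) (Λ : Fin N → ℝ)
    (hU : Uᵀ * U = 1) (hLdec : L = U * Matrix.diagonal Λ * Uᵀ)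
    -- a nonzero vector s
    (s : Fin N → ℝ) (hs : s ≠ 0)
    -- a function g (defined on the union of the spectra of L and H_M)
    (g : ℝ → ℝ)
    -- V_M has orthonormal columns spanning the Krylov subspace K_M(L, s),
    -- and its first column is s / ‖s‖₂
    (V : Matrix (Fin N) (Fin M) ℝ)
    (hV : Vᵀ * V = 1)
    (hspan : Submodule.span ℝ (Set.range fun j : Fin M => Vᵀ j)
      = Submodule.span ℝ (Set.range fun k : Fin M => (L ^ (k : ℕ)) *ᵥ s))
    (hfirst : ∀ i, V i ⟨0, hM⟩ = s i / euclNorm s)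
    -- a spectral decomposition of H_M = V_Mᵀ L V_M
    (W : Matrix (Fin M) (Fin M) ℝ) (μ : Fin M → ℝ)
    (hW : Wᵀ * W = 1) (hHdec : Vᵀ * L * V = W * Matrix.diagonal μ * Wᵀ) :
    euclNorm ((U * Matrix.diagonal (fun i => g (Λ i)) * Uᵀ) *ᵥ s
        - euclNorm s • (V *ᵥ ((W * Matrix.diagonal (fun i => g (μ i)) * Wᵀ)
            *ᵥ fun j : Fin M => if j = ⟨0, hM⟩ then (1 : ℝ) else 0)))
      ≤ 2 * euclNorm s *
        sInf { e : ℝ | ∃ p : Polynomial ℝ, p.natDegree ≤ M - 1 ∧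
          e = sSup ((fun z => |g z - p.eval z|) ''
                (spectrum ℝ L ∪ spectrum ℝ (Vᵀ * L * V))) } := by
  classical
  have hn : 0 < euclNorm s := euclNorm_pos s hs
  set nrm := euclNorm s with hnrm
  have hUU : U * Uᵀ = 1 := mul_eq_one_comm.mp hU
  have hWW : W * Wᵀ = 1 := mul_eq_one_comm.mp hW
  set H := Vᵀ * L * V with hH
  set e1 : Fin M → ℝ := (fun j : Fin M => if j = ⟨0, hM⟩ then (1 : ℝ) else 0) with he1
  have he1single : e1 = Pi.single ⟨0, hM⟩ 1 := by
    funext j; rw [he1]; simp [Pi.single_apply]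
  -- Krylov membership and projection
  have memK : ∀ k, k < M → (L ^ k) *ᵥ s ∈
      Submodule.span ℝ (Set.range fun j : Fin M => Vᵀ j) := by
    intro k hk
    rw [hspan]
    exact Submodule.subset_span ⟨⟨k, hk⟩, rfl⟩
  have proj : ∀ x ∈ Submodule.span ℝ (Set.range fun j : Fin M => Vᵀ j),
      (V * Vᵀ) *ᵥ x = x := by
    intro x hx
    induction hx using Submodule.span_induction with
    | mem x hx =>
      obtain ⟨j, rfl⟩ := hx
      show (V * Vᵀ) *ᵥ (Vᵀ j) = Vᵀ j
      rw [show Vᵀ j = V.col j from rfl, ← Matrix.mulVec_single_one V j, Matrix.mulVec_mulVec, Matrix.mul_assoc, hV,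
        Matrix.mul_one]
    | zero => exact Matrix.mulVec_zero _
    | add x y hx hy ihx ihy => rw [Matrix.mulVec_add, ihx, ihy]
    | smul c x hx ihx => rw [Matrix.mulVec_smul, ihx]
  have base : V *ᵥ e1 = fun i => s i / nrm := by
    rw [he1single, Matrix.mulVec_single_one]
    funext i
    exact hfirst i
  -- exactness for powers
  have exact_pow : ∀ k, k < M → (L ^ k) *ᵥ s = nrm • (V *ᵥ ((H ^ k) *ᵥ e1)) := by
    intro k
    induction k with
    | zero =>
      intro _
      rw [pow_zero, pow_zero, Matrix.one_mulVec, Matrix.one_mulVec, base]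
      funext i
      simp only [Pi.smul_apply, smul_eq_mul]
      rw [mul_comm, div_mul_cancel₀ (s i) hn.ne']
    | succ k ih =>
      intro hk1
      have hk : k < M := Nat.lt_of_succ_lt hk1
      have h1 : (L ^ (k+1)) *ᵥ s = (V * Vᵀ) *ᵥ ((L ^ (k+1)) *ᵥ s) := (proj _ (memK _ hk1)).symm
      rw [h1, pow_succ', ← Matrix.mulVec_mulVec s L (L ^ k), ih hk,
        Matrix.mulVec_smul, Matrix.mulVec_smul]
      congr 1
      simp only [Matrix.mulVec_mulVec]
      congr 1
      simp only [hH, pow_succ', Matrix.mul_assoc]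
  -- exactness for polynomials
  have exact_poly : ∀ p : Polynomial ℝ,
      (∑ k ∈ Finset.range M, p.coeff k • L ^ k) *ᵥ s
        = nrm • (V *ᵥ ((∑ k ∈ Finset.range M, p.coeff k • H ^ k) *ᵥ e1)) := by
    intro p
    rw [sum_mulVec', sum_mulVec', mulVec_sum', Finset.smul_sum]
    refine Finset.sum_congr rfl fun k hk => ?_
    rw [Matrix.smul_mulVec, exact_pow k (Finset.mem_range.mp hk),
      Matrix.smul_mulVec, Matrix.mulVec_smul, smul_comm]
  -- spectra
  have hΛmem : ∀ i, Λ i ∈ spectrum ℝ L := spec_conj_mem L U Λ hU hLdec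
  have hμmem : ∀ j, μ j ∈ spectrum ℝ H := spec_conj_mem H W μ hW hHdec
  have hsubL : spectrum ℝ L ⊆ Set.range Λ := spec_conj_subset L U Λ hU hLdec
  have hsubH : spectrum ℝ H ⊆ Set.range μ := spec_conj_subset H W μ hW hHdec
  obtain ⟨i0, hi0⟩ : ∃ i, s i ≠ 0 := Function.ne_iff.mp hs
  set S := { e : ℝ | ∃ p : Polynomial ℝ, p.natDegree ≤ M - 1 ∧
      e = sSup ((fun z => |g z - p.eval z|) '' (spectrum ℝ L ∪ spectrum ℝ H)) } with hS
  have hSne : S.Nonempty := ⟨_, 0, by simp, rfl⟩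
  -- main bound for each element of S
  have main : ∀ e ∈ S, euclNorm ((U * Matrix.diagonal (fun i => g (Λ i)) * Uᵀ) *ᵥ s
      - nrm • (V *ᵥ ((W * Matrix.diagonal (fun i => g (μ i)) * Wᵀ) *ᵥ e1)))
      ≤ 2 * nrm * e := by
    rintro e ⟨p, hdeg, rfl⟩
    set C := sSup ((fun z => |g z - p.eval z|) '' (spectrum ℝ L ∪ spectrum ℝ H)) with hC
    have hbdd : BddAbove ((fun z => |g z - p.eval z|) '' (spectrum ℝ L ∪ spectrum ℝ H)) := by
      apply BddAbove.mono (Set.image_mono (Set.union_subset_union hsubL hsubH))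
      exact (((Set.finite_range Λ).union (Set.finite_range μ)).image _).bddAbove
    have hCge : ∀ z ∈ spectrum ℝ L ∪ spectrum ℝ H, |g z - p.eval z| ≤ C :=
      fun z hz => le_csSup hbdd ⟨z, hz, rfl⟩
    have hC0 : 0 ≤ C := le_trans (abs_nonneg _) (hCge (Λ i0) (Or.inl (hΛmem i0)))
    have hdeg' : p.natDegree < M := lt_of_le_of_lt hdeg (Nat.sub_lt hM one_pos)
    set d1 : Fin N → ℝ := fun i => g (Λ i) - p.eval (Λ i) with hd1
    set d2 : Fin M → ℝ := fun j => g (μ j) - p.eval (μ j) with hd2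
    have hd1C : ∀ i, |d1 i| ≤ C := fun i => hCge (Λ i) (Or.inl (hΛmem i))
    have hd2C : ∀ j, |d2 j| ≤ C := fun j => hCge (μ j) (Or.inr (hμmem j))
    -- polynomial matrices
    have pL : ∑ k ∈ Finset.range M, p.coeff k • L ^ k
        = U * Matrix.diagonal (fun i => p.eval (Λ i)) * Uᵀ := by
      rw [conj_poly' U hU Λ L hLdec p.coeff,
        show (fun i => ∑ k ∈ Finset.range M, p.coeff k * Λ i ^ k) = fun i => p.eval (Λ i) from
          funext fun i => (Polynomial.eval_eq_sum_range' hdeg' (Λ i)).symm]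
    have pH : ∑ k ∈ Finset.range M, p.coeff k • H ^ k
        = W * Matrix.diagonal (fun j => p.eval (μ j)) * Wᵀ := by
      rw [conj_poly' W hW μ H hHdec p.coeff,
        show (fun j => ∑ k ∈ Finset.range M, p.coeff k * μ j ^ k) = fun j => p.eval (μ j) from
          funext fun j => (Polynomial.eval_eq_sum_range' hdeg' (μ j)).symm]
    have hpcancel : (U * Matrix.diagonal (fun i => p.eval (Λ i)) * Uᵀ) *ᵥ s
        = nrm • (V *ᵥ ((W * Matrix.diagonal (fun j => p.eval (μ j)) * Wᵀ) *ᵥ e1)) := by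
      rw [← pL, ← pH]
      exact exact_poly p
    -- difference of diagonal conjugations
    have hdiffL : U * Matrix.diagonal d1 * Uᵀ
        = U * Matrix.diagonal (fun i => g (Λ i)) * Uᵀ
          - U * Matrix.diagonal (fun i => p.eval (Λ i)) * Uᵀ := by
      rw [← Matrix.sub_mul, ← Matrix.mul_sub, ← Matrix.diagonal_sub]
      try rfl
    have hdiffH : W * Matrix.diagonal d2 * Wᵀ
        = W * Matrix.diagonal (fun j => g (μ j)) * Wᵀ
          - W * Matrix.diagonal (fun j => p.eval (μ j)) * Wᵀ := by
      rw [← Matrix.sub_mul, ← Matrix.mul_sub, ← Matrix.diagonal_sub]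
      try rfl
    have hcancel : (U * Matrix.diagonal (fun i => g (Λ i)) * Uᵀ) *ᵥ s
        - nrm • (V *ᵥ ((W * Matrix.diagonal (fun i => g (μ i)) * Wᵀ) *ᵥ e1))
        = (U * Matrix.diagonal d1 * Uᵀ) *ᵥ s
          - nrm • (V *ᵥ ((W * Matrix.diagonal d2 * Wᵀ) *ᵥ e1)) := by
      rw [hdiffL, hdiffH, Matrix.sub_mulVec, Matrix.sub_mulVec, Matrix.mulVec_sub, smul_sub,
        hpcancel]
      abel
    -- norm bounds
    have hb1 : euclNorm ((U * Matrix.diagonal d1 * Uᵀ) *ᵥ s) ≤ C * nrm := by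
      rw [← Matrix.mulVec_mulVec, ← Matrix.mulVec_mulVec, euclNorm_mulVec_orth U hU]
      have h2 : euclNorm (Uᵀ *ᵥ s) = nrm := by
        rw [euclNorm_mulVec_orth Uᵀ (by rw [Matrix.transpose_transpose]; exact hUU)]
      rw [← h2]
      exact euclNorm_diag_mulVec_le d1 C hC0 hd1C (Uᵀ *ᵥ s)
    have he1norm : euclNorm e1 = 1 := by
      have hsum : ∑ j, e1 j ^ 2 = 1 := by
        rw [he1]
        simp
      unfold euclNorm
      rw [hsum, Real.sqrt_one]
    have hb2 : euclNorm ((W * Matrix.diagonal d2 * Wᵀ) *ᵥ e1) ≤ C := by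
      rw [← Matrix.mulVec_mulVec, ← Matrix.mulVec_mulVec, euclNorm_mulVec_orth W hW]
      have h2 : euclNorm (Wᵀ *ᵥ e1) = 1 := by
        rw [euclNorm_mulVec_orth Wᵀ (by rw [Matrix.transpose_transpose]; exact hWW), he1norm]
      calc euclNorm (Matrix.diagonal d2 *ᵥ (Wᵀ *ᵥ e1)) ≤ C * euclNorm (Wᵀ *ᵥ e1) :=
            euclNorm_diag_mulVec_le d2 C hC0 hd2C (Wᵀ *ᵥ e1)
        _ = C := by rw [h2, mul_one]
    have hb2' : euclNorm (nrm • (V *ᵥ ((W * Matrix.diagonal d2 * Wᵀ) *ᵥ e1))) ≤ nrm * C := by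
      rw [euclNorm_smul, abs_of_pos hn, euclNorm_mulVec_orth V hV]
      exact mul_le_mul_of_nonneg_left hb2 hn.le
    calc euclNorm ((U * Matrix.diagonal (fun i => g (Λ i)) * Uᵀ) *ᵥ s
        - nrm • (V *ᵥ ((W * Matrix.diagonal (fun i => g (μ i)) * Wᵀ) *ᵥ e1)))
        = euclNorm ((U * Matrix.diagonal d1 * Uᵀ) *ᵥ s
          - nrm • (V *ᵥ ((W * Matrix.diagonal d2 * Wᵀ) *ᵥ e1))) := by rw [hcancel]
      _ ≤ euclNorm ((U * Matrix.diagonal d1 * Uᵀ) *ᵥ s)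
          + euclNorm (nrm • (V *ᵥ ((W * Matrix.diagonal d2 * Wᵀ) *ᵥ e1))) := euclNorm_sub_le _ _
      _ ≤ C * nrm + nrm * C := add_le_add hb1 hb2'
      _ = 2 * nrm * C := by ring
  -- conclude via sInf
  have h2n : 0 < 2 * nrm := by linarith
  set LHS := euclNorm ((U * Matrix.diagonal (fun i => g (Λ i)) * Uᵀ) *ᵥ s
      - nrm • (V *ᵥ ((W * Matrix.diagonal (fun i => g (μ i)) * Wᵀ) *ᵥ e1))) with hLHS
  have hInf : LHS / (2 * nrm) ≤ sInf S :=
    le_csInf hSne fun e he => (div_le_iff₀ h2n).mpr (by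
      have := main e he
      linarith)
  calc LHS = LHS / (2 * nrm) * (2 * nrm) := (div_mul_cancel₀ _ h2n.ne').symm
    _ ≤ sInf S * (2 * nrm) := mul_le_mul_of_nonneg_right hInf h2n.le
    _ = 2 * nrm * sInf S := mul_comm _ _
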